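/- Let L be a finite join-semidistributive lattice that is crosscut-simplicial. Then every sublattice of L (a subset closed under the join and meet of L, with the induced order) is crosscut-simplicial, and for every surjective lattice homomorphism φ from L onto a lattice L' (a map preserving binary joins and binary meets), the lattice L' is crosscut-simplicial. -/

import Mathlib

universe u v

def JoinSemidistrib (α : Type*) [Lattice α] : Prop :=
  ∀ x y z : α, x ⊔ y = x ⊔ z → x ⊔ (y ⊓ z) = x ⊔ y

def MeetSemidistrib (α : Type*) [Lattice α] : Prop :=
  ∀ x y z : α, x ⊓ y = x ⊓ z → x ⊓ (y ⊔ z) = x ⊓ y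

section JoinDefs

variable {α : Type*} [Lattice α] [OrderBot α]

/-- `j` is join-irreducible: not the bottom element, and `j = a ⊔ b` implies `j = a` or `j = b`. -/
def JoinIrred (j : α) : Prop :=
  j ≠ ⊥ ∧ ∀ a b : α, j = a ⊔ b → j = a ∨ j = b

/-- `A` join-refines `B`: every element of `A` is below some element of `B`. -/
def JoinRefines (A B : Finset α) : Prop :=
  ∀ a ∈ A, ∃ b ∈ B, a ≤ b

/-- `A` is an irredundant join representation of `w`. -/
def IrredJoinRep (A : Finset α) (w : α) : Prop :=
  A.sup id = w ∧ ∀ A' ⊂ A, A'.sup id < w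

/-- `A` is the canonical join representation of `w`: the irredundant join representation
of `w` that join-refines every irredundant join representation of `w`. -/
def CanonicalJoinRep (A : Finset α) (w : α) : Prop :=
  IrredJoinRep A w ∧ ∀ B : Finset α, IrredJoinRep B w → JoinRefines A B

/-- `A` joins canonically, i.e. `A` is a face of the canonical join complex. -/
def JoinsCanonically (A : Finset α) : Prop :=
  CanonicalJoinRep A (A.sup id)

/-- `j` is a canonical joinand of `w`. -/
def CanonicalJoinand (j w : α) : Prop :=
  ∃ A : Finset α, CanonicalJoinRep A w ∧ j ∈ A

end JoinDefs

/-- The canonical join complex is flag: any finite set of join-irreducible elements all of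
whose two-element subsets are faces is itself a face. -/
def FlagCanonicalJoinComplex (α : Type*) [Lattice α] [OrderBot α] [DecidableEq α] : Prop :=
  ∀ F : Finset α, (∀ j ∈ F, JoinIrred j) →
    (∀ j ∈ F, ∀ j' ∈ F, j ≠ j' → JoinsCanonically ({j, j'} : Finset α)) →
    JoinsCanonically F

/-- A lattice is crosscut-simplicial if for every `x ≤ y` and every proper subset `S` of the
set of atoms of the interval `[x, y]` (elements `a` with `x ⋖ a` and `a ≤ y`), the join of `x`
with all elements of `S` is strictly less than `y`. -/
def CrosscutSimplicial (β : Type*) [Lattice β] : Prop :=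
  ∀ x y : β, x ≤ y → ∀ S : Finset β,
    (∀ a ∈ S, x ⋖ a ∧ a ≤ y) →
    (∃ a : β, (x ⋖ a ∧ a ≤ y) ∧ a ∉ S) →
    S.fold (· ⊔ · : β → β → β) x id < y

section MeetDefs

variable {α : Type*} [Lattice α] [OrderTop α]

/-- `m` is meet-irreducible: not the top element, and `m = a ⊓ b` implies `m = a` or `m = b`. -/
def MeetIrred (m : α) : Prop :=
  m ≠ ⊤ ∧ ∀ a b : α, m = a ⊓ b → m = a ∨ m = b

/-- `A` meet-refines `B`: every element of `A` is above some element of `B`. -/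
def MeetRefines (A B : Finset α) : Prop :=
  ∀ a ∈ A, ∃ b ∈ B, b ≤ a

/-- `A` is an irredundant meet representation of `w`. -/
def IrredMeetRep (A : Finset α) (w : α) : Prop :=
  A.inf id = w ∧ ∀ A' ⊂ A, w < A'.inf id

/-- `A` is the canonical meet representation of `w`. -/
def CanonicalMeetRep (A : Finset α) (w : α) : Prop :=
  IrredMeetRep A w ∧ ∀ B : Finset α, IrredMeetRep B w → MeetRefines A B

/-- `A` meets canonically, i.e. `A` is a face of the canonical meet complex. -/
def MeetsCanonically (A : Finset α) : Prop :=
  CanonicalMeetRep A (A.inf id)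

end MeetDefs

/-- The canonical meet complex is flag. -/
def FlagCanonicalMeetComplex (α : Type*) [Lattice α] [OrderTop α] [DecidableEq α] : Prop :=
  ∀ F : Finset α, (∀ m ∈ F, MeetIrred m) →
    (∀ m ∈ F, ∀ m' ∈ F, m ≠ m' → MeetsCanonically ({m, m'} : Finset α)) →
    MeetsCanonically F



/-! ### Auxiliary machinery for the proof -/

section AuxProof

variable {α : Type u} [Lattice α]

private lemma cov_pinch {m a s : α} (h : m ⋖ a) (h1 : m ≤ s) (h2 : s ≤ a) : s = m ∨ s = a := by
  rcases eq_or_lt_of_le h2 with he | hl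
  · exact Or.inr he
  · left
    by_contra hne
    exact h.2 (lt_of_le_of_ne h1 (Ne.symm hne)) hl

private lemma cov_meet {m a t : α} (h : m ⋖ a) (ht : m ≤ t) : a ⊓ t = m ∨ a ≤ t := by
  rcases cov_pinch h (le_inf h.lt.le ht) inf_le_left with he | he
  · exact Or.inl he
  · exact Or.inr (he ▸ inf_le_right)

variable [Fintype α]

/-- In a finite lattice, above any element strictly below `b` there is a cover below `b`. -/
private lemma exists_cov_le {m b : α} (h : m < b) : ∃ c, m ⋖ c ∧ c ≤ b := by
  obtain ⟨c, hc, hmin⟩ := Set.Finite.exists_minimalFor id {x : α | m < x ∧ x ≤ b}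
    (Set.toFinite _) ⟨b, h, le_rfl⟩
  refine ⟨c, ⟨hc.1, fun d hd hdc => ?_⟩, hc.2⟩
  have hdmem : d ∈ {x : α | m < x ∧ x ≤ b} := ⟨hd, hdc.le.trans hc.2⟩
  exact absurd (hmin hdmem hdc.le) (not_le_of_gt hdc)

private lemma exists_maximal_above (F : Set α) {x : α} (hx : x ∈ F) :
    ∃ M, x ≤ M ∧ M ∈ F ∧ ∀ t ∈ F, M ≤ t → t = M := by
  obtain ⟨M, hM, hmax⟩ := Set.Finite.exists_maximalFor id {t | t ∈ F ∧ x ≤ t}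
    (Set.toFinite _) ⟨x, hx, le_rfl⟩
  exact ⟨M, hM.2, hM.1, fun t ht hMt => le_antisymm (hmax ⟨ht, hM.2.trans hMt⟩ hMt) hMt⟩

private lemma jsd_inf' (hjsd : JoinSemidistrib α) (x w : α) :
    ∀ (s : Finset α) (hs : s.Nonempty), (∀ t ∈ s, x ⊔ t = w) → x ⊔ s.inf' hs id = w := by
  intro s hs
  induction hs using Finset.Nonempty.cons_induction with
  | singleton a =>
    intro h
    simpa using h a (by simp)
  | cons a s ha hs ih =>
    intro h
    rw [Finset.inf'_cons]
    show x ⊔ (a ⊓ s.inf' hs id) = w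
    have h1 : x ⊔ a = w := h a (Finset.mem_cons_self a s)
    have h2 : x ⊔ s.inf' hs id = w := ih (fun t ht => h t (Finset.mem_cons_of_mem ht))
    have h3 := hjsd x a (s.inf' hs id) (h1.trans h2.symm)
    rw [h3, h1]

/-- Key lemma: a finite join-semidistributive crosscut-simplicial lattice admits no
"configuration" `(m, a, u, v)` with `m ⋖ a`, `a ⊓ u = a ⊓ v = m` and `a ≤ u ⊔ v`. -/
private theorem no_config (hjsd : JoinSemidistrib α) (hcc : CrosscutSimplicial α) :
    ∀ m a u v : α, m ⋖ a → a ⊓ u = m → a ⊓ v = m → ¬ a ≤ u ⊔ v := by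
  classical
  suffices H : ∀ (n : ℕ) (m a u v : α), (Set.Icc m (u ⊔ v)).ncard = n →
      m ⋖ a → a ⊓ u = m → a ⊓ v = m → ¬ a ≤ u ⊔ v by
    intro m a u v
    exact H _ m a u v rfl
  intro n
  induction n using Nat.strong_induction_on with
  | _ n IH =>
  intro m a u v hn hcov hu hv hle
  set w := u ⊔ v with hwdef
  have hma : m < a := hcov.lt
  have haw : a ≤ w := hle
  have hmw : m ≤ w := hma.le.trans haw
  have hane : a ≠ m := hma.ne'
  -- induction hypothesis, repackaged
  have IH' : ∀ m' a' u' v' : α, m ≤ m' → u' ⊔ v' ≤ w → (¬ m' ≤ m ∨ ¬ w ≤ u' ⊔ v') →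
      m' ⋖ a' → a' ⊓ u' = m' → a' ⊓ v' = m' → ¬ a' ≤ u' ⊔ v' := by
    intro m' a' u' v' h1 h2 h3 hc h4 h5
    have hsub : Set.Icc m' (u' ⊔ v') ⊂ Set.Icc m w := by
      constructor
      · intro t ht
        exact ⟨h1.trans ht.1, ht.2.trans h2⟩
      · intro hsup
        rcases h3 with h3 | h3
        · exact h3 (hsup ⟨le_rfl, hmw⟩).1
        · exact h3 (hsup ⟨hmw, le_rfl⟩).2
    have hlt : (Set.Icc m' (u' ⊔ v')).ncard < n :=
      hn ▸ Set.ncard_lt_ncard hsub (Set.toFinite _)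
    exact IH _ hlt m' a' u' v' rfl hc h4 h5
  -- the set F of elements of [m, w] meeting a at m
  set F : Set α := {t | t ≤ w ∧ a ⊓ t = m} with hFdef
  have hmemF_le : ∀ t ∈ F, m ≤ t := by
    intro t ht
    have h1 : a ⊓ t ≤ t := inf_le_right
    rwa [ht.2] at h1
  have memF_of_le : ∀ {t y0 : α}, m ≤ t → t ≤ y0 → y0 ∈ F → t ∈ F := by
    intro t y0 h1 h2 h3
    refine ⟨h2.trans h3.1, le_antisymm ?_ (le_inf hma.le h1)⟩
    exact le_trans (inf_le_inf_left a h2) h3.2.le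
  have hmF : m ∈ F := ⟨hmw, inf_eq_right.mpr hma.le⟩
  -- joins of elements of F stay in F unless they reach w
  have key : ∀ c ∈ F, ∀ d ∈ F, c ⊔ d ≠ w → c ⊔ d ∈ F := by
    intro c hc d hd hne
    have hcd : c ⊔ d ≤ w := sup_le hc.1 hd.1
    rcases cov_meet hcov ((hmemF_le c hc).trans le_sup_left) with h | h
    · exact ⟨hcd, h⟩
    · exact absurd h (IH' m a c d le_rfl hcd
        (Or.inr (fun hcon => hne (le_antisymm hcd hcon))) hcov hc.2 hd.2)
  -- maximal elements of F join anything of F not below them to w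
  have key2 : ∀ M, M ∈ F → (∀ t ∈ F, M ≤ t → t = M) → ∀ t ∈ F, ¬ t ≤ M → M ⊔ t = w := by
    intro M hM hmax t ht hnle
    by_contra hne
    have h1 := key M hM t ht hne
    have h2 := hmax _ h1 le_sup_left
    exact hnle (le_sup_right.trans h2.le)
  have hFne_w : ∀ M ∈ F, M ≠ w := by
    intro M hM hMw
    apply hane
    have h1 := hM.2
    rwa [hMw, inf_eq_left.mpr haw] at h1
  -- two distinct maximal elements of F
  obtain ⟨Y, hYge, hYF, hYmax⟩ := exists_maximal_above F (show u ∈ F from ⟨le_sup_left, hu⟩)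
  obtain ⟨Z, hZge, hZF, hZmax⟩ := exists_maximal_above F (show v ∈ F from ⟨le_sup_right, hv⟩)
  have hYZ : Y ≠ Z := by
    intro h
    apply hane
    have hwZ : w ≤ Z := sup_le (h ▸ hYge) hZge
    have h1 := hZF.2
    rwa [inf_eq_left.mpr (haw.trans hwZ)] at h1
  -- the join of all atoms of [m, w] other than a; crosscut keeps it below w
  set Atoms : Finset α := Finset.univ.filter (fun c => m ⋖ c ∧ c ≤ w ∧ c ≠ a) with hAtdef
  have hAtmem : ∀ c ∈ Atoms, m ⋖ c ∧ c ≤ w := by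
    intro c hc
    rw [hAtdef, Finset.mem_filter] at hc
    exact ⟨hc.2.1, hc.2.2.1⟩
  have hAtF : ∀ c ∈ Atoms, c ∈ F := by
    intro c hc
    rw [hAtdef, Finset.mem_filter] at hc
    obtain ⟨-, hcc2, hcw, hca⟩ := hc
    rcases cov_meet hcov hcc2.lt.le with h | h
    · exact ⟨hcw, h⟩
    · rcases cov_pinch hcc2 hma.le h with h2 | h2
      · exact absurd h2 hane
      · exact absurd h2.symm hca
  have haAt : a ∉ Atoms := by
    intro hmem
    rw [hAtdef, Finset.mem_filter] at hmem
    exact hmem.2.2.2 rfl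
  have ht₀lt : Atoms.fold (· ⊔ · : α → α → α) m id < w := hcc m w hmw Atoms hAtmem ⟨a, ⟨hcov, haw⟩, haAt⟩
  set t₀ := Atoms.fold (· ⊔ · : α → α → α) m id with ht₀def
  have fold_F : ∀ (s : Finset α), (∀ c ∈ s, c ∈ F) →
      s.fold (· ⊔ · : α → α → α) m id = w ∨ s.fold (· ⊔ · : α → α → α) m id ∈ F := by
    intro s
    induction s using Finset.induction_on with
    | empty =>
      intro _
      exact Or.inr hmF
    | @insert c s hcs ih =>
      intro h
      rw [Finset.fold_insert hcs]
      have hcF := h c (Finset.mem_insert_self c s)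
      rcases ih (fun t ht => h t (Finset.mem_insert_of_mem ht)) with h1 | h1
      · left
        rw [h1]
        exact sup_eq_right.mpr hcF.1
      · by_cases h2 : c ⊔ s.fold (· ⊔ · : α → α → α) m id = w
        · exact Or.inl h2
        · exact Or.inr (key c hcF _ h1 h2)
  have le_fold : ∀ (s : Finset α) (c : α), c ∈ s → c ≤ s.fold (· ⊔ · : α → α → α) m id := by
    intro s
    induction s using Finset.induction_on with
    | empty => simp
    | @insert d s hds ih =>
      intro c hc
      rw [Finset.fold_insert hds]
      rcases Finset.mem_insert.mp hc with h | h
      · exact h ▸ le_sup_left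
      · exact (ih c h).trans le_sup_right
  have ht₀F : t₀ ∈ F := (fold_F Atoms hAtF).resolve_left (ne_of_lt ht₀lt)
  obtain ⟨T, hTge, hTF, hTmax⟩ := exists_maximal_above F ht₀F
  -- choose the pair (y, z) of distinct maximal elements with z = T above all atoms ≠ a
  obtain ⟨y, hyF, hymax, hyT⟩ :
      ∃ y, y ∈ F ∧ (∀ t ∈ F, y ≤ t → t = y) ∧ y ≠ T := by
    by_cases hYT : Y = T
    · exact ⟨Z, hZF, hZmax, fun h => hYZ (hYT.trans h.symm)⟩
    · exact ⟨Y, hYF, hYmax, hYT⟩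
  set z := T with hzdef
  have hzF : z ∈ F := hTF
  have hzmax : ∀ t ∈ F, z ≤ t → t = z := hTmax
  have hyzw : y ⊔ z = w := by
    apply key2 y hyF hymax z hzF
    intro h
    exact hyT (hzmax y hyF h)
  have hyw : y ≠ w := hFne_w y hyF
  have hzw : z ≠ w := hFne_w z hzF
  have hzyw : z ⊔ y = w := by rw [sup_comm]; exact hyzw
  have hatomz : ∀ c : α, m ⋖ c → c ≤ w → c ≠ a → c ≤ z := by
    intro c h1 h2 h3
    have hmem : c ∈ Atoms := by
      rw [hAtdef, Finset.mem_filter]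
      exact ⟨Finset.mem_univ c, h1, h2, h3⟩
    exact (le_fold Atoms c hmem).trans hTge
  -- p := y ⊓ z is strictly above m
  set p := y ⊓ z with hpdef
  have hpy : p ≤ y := inf_le_left
  have hpz : p ≤ z := inf_le_right
  have hpw : p ≤ w := hpy.trans hyF.1
  have hpm : m < p := by
    set Vs : Finset α := Finset.univ.filter (fun t => m ≤ t ∧ t ≤ w ∧ z ⊔ t = w) with hVsdef
    have hyVs : y ∈ Vs := by
      rw [hVsdef, Finset.mem_filter]
      exact ⟨Finset.mem_univ y, hmemF_le y hyF, hyF.1, hzyw⟩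
    have hVne : Vs.Nonempty := ⟨y, hyVs⟩
    set v₀ := Vs.inf' hVne id with hv₀def
    have hv₀join : z ⊔ v₀ = w := by
      apply jsd_inf' hjsd z w Vs hVne
      intro t ht
      rw [hVsdef, Finset.mem_filter] at ht
      exact ht.2.2.2
    have hv₀min : ∀ t : α, m ≤ t → t ≤ w → z ⊔ t = w → v₀ ≤ t := by
      intro t h1 h2 h3
      refine Finset.inf'_le id ?_
      rw [hVsdef, Finset.mem_filter]
      exact ⟨Finset.mem_univ t, h1, h2, h3⟩
    have hmv₀ : m ≤ v₀ := by
      refine Finset.le_inf' hVne id ?_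
      intro t ht
      rw [hVsdef, Finset.mem_filter] at ht
      exact ht.2.1
    have hv₀y : v₀ ≤ y := Finset.inf'_le id hyVs
    have hv₀z : ¬ v₀ ≤ z := by
      intro h
      exact hzw (by rw [← hv₀join, sup_eq_left.mpr h])
    have hmv₀lt : m < v₀ := lt_of_le_of_ne hmv₀ (by
      intro h
      exact hv₀z (h ▸ hmemF_le z hzF))
    obtain ⟨c, hccov, hcv₀⟩ := exists_cov_le hmv₀lt
    have hcy : c ≤ y := hcv₀.trans hv₀y
    have hcw : c ≤ w := hcy.trans hyF.1
    rcases eq_or_lt_of_le hcv₀ with he | hl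
    · -- v₀ would be an atom, hence below z: contradiction
      exfalso
      apply hv₀z
      have hv₀cov : m ⋖ v₀ := he ▸ hccov
      have hv₀w : v₀ ≤ w := hv₀y.trans hyF.1
      refine hatomz v₀ hv₀cov hv₀w ?_
      intro hva
      apply hane
      have h2 : a ≤ y := hva ▸ hv₀y
      have h1 := hyF.2
      rwa [inf_eq_left.mpr h2] at h1
    · have hcF : c ∈ F := memF_of_le hccov.lt.le hcy hyF
      have hcz : c ≤ z := by
        by_contra hcz
        have h1 := key2 z hzF hzmax c hcF hcz
        exact absurd (hv₀min c hccov.lt.le hcw h1) (not_le_of_gt hl)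
      exact lt_of_lt_of_le hccov.lt (le_inf hcy hcz)
  -- meet-semidistributivity at p on [p, w], from the induction hypothesis
  have SDp : ∀ x g₁ g₂ : α, p ≤ x → p ≤ g₁ → p ≤ g₂ → g₁ ≤ w → g₂ ≤ w →
      x ⊓ g₁ = p → x ⊓ g₂ = p → x ⊓ (g₁ ⊔ g₂) = p := by
    intro x g₁ g₂ hx h1 h2 h1w h2w e1 e2
    by_contra hne
    have hple : p ≤ x ⊓ (g₁ ⊔ g₂) := le_inf hx (h1.trans le_sup_left)
    have hplt : p < x ⊓ (g₁ ⊔ g₂) := hple.lt_of_ne (fun h => hne h.symm)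
    obtain ⟨c, hc, hcb⟩ := exists_cov_le hplt
    have hcx : c ≤ x := hcb.trans inf_le_left
    refine IH' p c g₁ g₂ hpm.le (sup_le h1w h2w) (Or.inl (not_le_of_gt hpm)) hc ?_ ?_
      (hcb.trans inf_le_right)
    · exact le_antisymm (le_trans (inf_le_inf_right g₁ hcx) e1.le) (le_inf hc.lt.le h1)
    · exact le_antisymm (le_trans (inf_le_inf_right g₂ hcx) e2.le) (le_inf hc.lt.le h2)
  -- the finishing argument, symmetric in the pair
  have finisher : ∀ y' z' : α, y' ∈ F → z' ∈ F → (∀ t ∈ F, z' ≤ t → t = z') →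
      y' ⊔ z' = w → p ≤ y' → p ≤ z' → y' ⊓ z' ≤ p → (a ⊔ p) ⊓ y' ≠ p → False := by
    intro y' z' hy'F hz'F hz'max hy'z'w hpy' hpz' hglb hrne
    have hz'w : z' ≠ w := hFne_w z' hz'F
    set r := (a ⊔ p) ⊓ y' with hrdef
    have hpr : p < r := lt_of_le_of_ne (le_inf le_sup_right hpy') (Ne.symm hrne)
    have hry' : r ≤ y' := inf_le_right
    have hrw : r ≤ w := hry'.trans hy'F.1
    have hrF : r ∈ F := memF_of_le (hpm.le.trans hpr.le) hry' hy'F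
    have hrz' : ¬ r ≤ z' := fun h => hpr.not_ge ((le_inf hry' h).trans hglb)
    have hz'r : z' ⊔ r = w := key2 z' hz'F hz'max r hrF hrz'
    -- v₀ := the minimum of {t ∈ [m,w] | z' ⊔ t = w}
    set Vs : Finset α := Finset.univ.filter (fun t => m ≤ t ∧ t ≤ w ∧ z' ⊔ t = w) with hVsdef
    have hrVs : r ∈ Vs := by
      rw [hVsdef, Finset.mem_filter]
      exact ⟨Finset.mem_univ r, hpm.le.trans hpr.le, hrw, hz'r⟩
    have hVne : Vs.Nonempty := ⟨r, hrVs⟩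
    set v₀ := Vs.inf' hVne id with hv₀def
    have hv₀join : z' ⊔ v₀ = w := by
      apply jsd_inf' hjsd z' w Vs hVne
      intro t ht
      rw [hVsdef, Finset.mem_filter] at ht
      exact ht.2.2.2
    have hv₀min : ∀ t : α, m ≤ t → t ≤ w → z' ⊔ t = w → v₀ ≤ t := by
      intro t h1 h2 h3
      refine Finset.inf'_le id ?_
      rw [hVsdef, Finset.mem_filter]
      exact ⟨Finset.mem_univ t, h1, h2, h3⟩
    have hmv₀ : m ≤ v₀ := by
      refine Finset.le_inf' hVne id ?_
      intro t ht
      rw [hVsdef, Finset.mem_filter] at ht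
      exact ht.2.1
    have hv₀r : v₀ ≤ r := Finset.inf'_le id hrVs
    have hv₀y' : v₀ ≤ y' := hv₀r.trans hry'
    have hv₀z' : ¬ v₀ ≤ z' := fun h => hz'w (by rw [← hv₀join, sup_eq_left.mpr h])
    have hv₀p : ¬ v₀ ≤ p := fun h => hv₀z' (h.trans hpz')
    -- β := p ⊔ v₀ covers p
    set β : α := p ⊔ v₀ with hβdef
    have hβy' : β ≤ y' := sup_le hpy' hv₀y'
    have hβw : β ≤ w := hβy'.trans hy'F.1
    have hpβ : p < β := lt_of_le_of_ne le_sup_left (fun h => hv₀p (h ▸ le_sup_right))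
    obtain ⟨a₁, ha₁cov, ha₁β⟩ := exists_cov_le hpβ
    have ha₁y' : a₁ ≤ y' := ha₁β.trans hβy'
    have ha₁F : a₁ ∈ F := memF_of_le (hpm.le.trans ha₁cov.lt.le) ha₁y' hy'F
    have ha₁z' : ¬ a₁ ≤ z' := fun h => ha₁cov.lt.not_ge ((le_inf ha₁y' h).trans hglb)
    have hza₁ : z' ⊔ a₁ = w := key2 z' hz'F hz'max a₁ ha₁F ha₁z'
    have hv₀a₁ : v₀ ≤ a₁ := hv₀min a₁ (hpm.le.trans ha₁cov.lt.le) (ha₁y'.trans hy'F.1) hza₁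
    have hβa₁ : β = a₁ := le_antisymm (by rw [hβdef]; exact sup_le ha₁cov.lt.le hv₀a₁) ha₁β
    have hpcovβ : p ⋖ β := hβa₁ ▸ ha₁cov
    -- κ := the join of all g ∈ [p, w] with ¬ β ≤ g; it stays away from β
    set Ks : Finset α := Finset.univ.filter (fun g => p ≤ g ∧ g ≤ w ∧ ¬ β ≤ g) with hKsdef
    have hz'Ks : z' ∈ Ks := by
      rw [hKsdef, Finset.mem_filter]
      exact ⟨Finset.mem_univ z', hpz', hz'F.1,
        fun h => hv₀z' ((le_sup_right.trans h : v₀ ≤ z'))⟩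
    have hKne : Ks.Nonempty := ⟨z', hz'Ks⟩
    have sup'_K : ∀ (s : Finset α) (hs : s.Nonempty), (∀ g ∈ s, p ≤ g ∧ g ≤ w ∧ ¬ β ≤ g) →
        p ≤ s.sup' hs id ∧ s.sup' hs id ≤ w ∧ ¬ β ≤ s.sup' hs id := by
      intro s hs
      induction hs using Finset.Nonempty.cons_induction with
      | singleton g =>
        intro h
        simpa using h g (by simp)
      | cons g s hg hs ih =>
        intro h
        obtain ⟨h1, h2, h3⟩ := h g (Finset.mem_cons_self g s)
        obtain ⟨i1, i2, i3⟩ := ih (fun t ht => h t (Finset.mem_cons_of_mem ht))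
        rw [Finset.sup'_cons]
        show p ≤ g ⊔ s.sup' hs id ∧ g ⊔ s.sup' hs id ≤ w ∧ ¬ β ≤ g ⊔ s.sup' hs id
        refine ⟨h1.trans le_sup_left, sup_le h2 i2, ?_⟩
        have e1 : β ⊓ g = p := by
          rcases cov_pinch hpcovβ (le_inf hpβ.le h1) inf_le_left with he | he
          · exact he
          · exact absurd (he ▸ inf_le_right) h3
        have e2 : β ⊓ s.sup' hs id = p := by
          rcases cov_pinch hpcovβ (le_inf hpβ.le i1) inf_le_left with he | he
          · exact he
          · exact absurd (he ▸ inf_le_right) i3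
        intro hcon
        have h4 := SDp β g (s.sup' hs id) hpβ.le h1 i1 h2 i2 e1 e2
        rw [inf_eq_left.mpr hcon] at h4
        exact hpβ.ne' h4
    set κ := Ks.sup' hKne id with hκdef
    have hκprops : p ≤ κ ∧ κ ≤ w ∧ ¬ β ≤ κ := by
      apply sup'_K Ks hKne
      intro g hg
      rw [hKsdef, Finset.mem_filter] at hg
      exact hg.2
    have hz'κ : z' ≤ κ := Finset.le_sup' id hz'Ks
    have haκ : ¬ a ≤ κ := by
      intro h
      apply hκprops.2.2
      have hapκ : a ⊔ p ≤ κ := sup_le h hκprops.1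
      have hv₀κ : v₀ ≤ κ := hv₀r.trans (inf_le_left.trans hapκ)
      rw [hβdef]
      exact sup_le hκprops.1 hv₀κ
    have hκF : κ ∈ F := by
      rcases cov_meet hcov (hpm.le.trans hκprops.1) with h | h
      · exact ⟨hκprops.2.1, h⟩
      · exact absurd h haκ
    have hκz' : κ = z' := hz'max κ hκF hz'κ
    -- hence a ⊔ z' = w, so v₀ ≤ a: final contradiction via the cover m ⋖ a
    have hβaz' : β ≤ a ⊔ z' := by
      by_contra hcon
      have hmem : a ⊔ z' ∈ Ks := by
        rw [hKsdef, Finset.mem_filter]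
        exact ⟨Finset.mem_univ _, hpz'.trans le_sup_right, sup_le haw hz'F.1, hcon⟩
      have h1 : a ⊔ z' ≤ κ := Finset.le_sup' id hmem
      rw [hκz'] at h1
      have h2 : a ≤ z' := le_sup_left.trans h1
      apply hane
      have h3 := hz'F.2
      rwa [inf_eq_left.mpr h2] at h3
    have hz'a : z' ⊔ a = w := by
      apply le_antisymm (sup_le hz'F.1 haw)
      calc w = z' ⊔ v₀ := hv₀join.symm
        _ ≤ z' ⊔ β := sup_le_sup_left le_sup_right z'
        _ ≤ z' ⊔ (a ⊔ z') := sup_le_sup_left hβaz' z'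
        _ = z' ⊔ a := by rw [sup_comm a z', ← sup_assoc, sup_idem]
    have hv₀a : v₀ ≤ a := hv₀min a hma.le haw hz'a
    rcases cov_pinch hcov hmv₀ hv₀a with h | h
    · exact hv₀z' (h ▸ hmemF_le z' hz'F)
    · apply hane
      have h2 : a ≤ y' := h ▸ hv₀y'
      have h3 := hy'F.2
      rwa [inf_eq_left.mpr h2] at h3
  -- final case split
  by_cases hcase : (a ⊔ p) ⊓ y = p
  · have hcase2 : (a ⊔ p) ⊓ z ≠ p := by
      intro h2
      have h3 := SDp (a ⊔ p) y z le_sup_right hpy hpz hyF.1 hzF.1 hcase h2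
      rw [hyzw, inf_eq_left.mpr (sup_le haw hpw)] at h3
      have ha_p : a ≤ p := le_sup_left.trans h3.le
      apply hane
      have h4 := hyF.2
      rwa [inf_eq_left.mpr (ha_p.trans hpy)] at h4
    exact finisher z y hzF hyF hymax hzyw hpz hpy ((inf_comm z y).le.trans hpdef.ge) hcase2
  · exact finisher y z hyF hzF hzmax hyzw hpy hpz hpdef.ge hcase

/-- A finite join-semidistributive crosscut-simplicial lattice is meet-semidistributive. -/
private theorem msd_of_jsd_crosscut (hjsd : JoinSemidistrib α) (hcc : CrosscutSimplicial α) :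
    MeetSemidistrib α := by
  intro x y z hxy
  by_contra hne
  have hmb : x ⊓ y ≤ x ⊓ (y ⊔ z) := inf_le_inf_left x le_sup_left
  have hlt : x ⊓ y < x ⊓ (y ⊔ z) := hmb.lt_of_ne (fun h => hne h.symm)
  obtain ⟨c, hc, hcb⟩ := exists_cov_le hlt
  have hcx : c ≤ x := hcb.trans inf_le_left
  refine no_config hjsd hcc (x ⊓ y) c y z hc ?_ ?_ (hcb.trans inf_le_right)
  · exact le_antisymm (inf_le_inf_right y hcx) (le_inf hc.lt.le inf_le_right)
  · refine le_antisymm ?_ (le_inf hc.lt.le (hxy ▸ inf_le_right))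
    exact le_trans (inf_le_inf_right z hcx) (hxy ▸ le_rfl)

end AuxProof

/-- A meet-semidistributive lattice (no finiteness needed) is crosscut-simplicial. -/
private theorem crosscut_of_msd {β : Type*} [Lattice β] (hm : MeetSemidistrib β) :
    CrosscutSimplicial β := by
  classical
  intro x y hxy S hS hex
  obtain ⟨a, ⟨hacov, hay⟩, haS⟩ := hex
  have main : ∀ s : Finset β, (∀ c ∈ s, (x ⋖ c ∧ c ≤ y) ∧ c ≠ a) →
      a ⊓ s.fold (· ⊔ · : β → β → β) x id = x ∧ s.fold (· ⊔ · : β → β → β) x id ≤ y := by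
    intro s
    induction s using Finset.induction_on with
    | empty =>
      intro _
      constructor
      · simpa using inf_eq_right.mpr hacov.lt.le
      · simpa using hxy
    | @insert c s hcs ih =>
      intro h
      obtain ⟨⟨hccov, hcy⟩, hca⟩ := h c (Finset.mem_insert_self c s)
      obtain ⟨ih1, ih2⟩ := ih (fun t ht => h t (Finset.mem_insert_of_mem ht))
      rw [Finset.fold_insert hcs]
      show a ⊓ (c ⊔ s.fold (· ⊔ · : β → β → β) x id) = x ∧ c ⊔ s.fold (· ⊔ · : β → β → β) x id ≤ y
      have hac : a ⊓ c = x := by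
        rcases cov_pinch hacov (le_inf hacov.lt.le hccov.lt.le) inf_le_left with he | he
        · exact he
        · have h1 : a ≤ c := he ▸ inf_le_right
          rcases cov_pinch hccov hacov.lt.le h1 with h2 | h2
          · exact absurd h2 hacov.lt.ne'
          · exact absurd h2.symm hca
      constructor
      · have h3 := hm a c (s.fold (· ⊔ · : β → β → β) x id) (hac.trans ih1.symm)
        rw [h3, hac]
      · exact sup_le hcy ih2
  obtain ⟨h1, h2⟩ := main S (fun c hc => ⟨hS c hc, fun he => haS (he ▸ hc)⟩)
  refine h2.lt_of_ne (fun he => ?_)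
  rw [he, inf_eq_left.mpr hay] at h1
  exact hacov.lt.ne' h1

/-- Meet-semidistributivity passes to sublattices. -/
private theorem msd_sublattice {α : Type u} [Lattice α] (hm : MeetSemidistrib α)
    (S : Sublattice α) : MeetSemidistrib S := by
  intro x y z h
  have h' : (x : α) ⊓ (y : α) = (x : α) ⊓ (z : α) := by
    rw [← Sublattice.coe_inf, ← Sublattice.coe_inf, h]
  have h2 := hm (x : α) (y : α) (z : α) h'
  apply Subtype.coe_injective
  show ((x ⊓ (y ⊔ z) : S) : α) = ((x ⊓ y : S) : α)
  rw [Sublattice.coe_inf, Sublattice.coe_sup, Sublattice.coe_inf]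
  exact h2

/-- Meet-semidistributivity passes to images of surjective lattice homomorphisms
(out of a finite lattice). -/
private theorem msd_quotient {α : Type u} {β : Type v} [Lattice α] [Fintype α] [Lattice β]
    (hm : MeetSemidistrib α) (φ : LatticeHom α β) (hφ : Function.Surjective φ) :
    MeetSemidistrib β := by
  classical
  have hfib : ∀ b : β, (Finset.univ.filter (fun x : α => φ x = b)).Nonempty := by
    intro b
    obtain ⟨x, hx⟩ := hφ b
    exact ⟨x, by simp [hx]⟩
  set σ : β → α := fun b => (Finset.univ.filter (fun x : α => φ x = b)).sup' (hfib b) id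
    with hσdef
  have hφσ : ∀ b, φ (σ b) = b := by
    intro b
    rw [hσdef]
    simp only []
    rw [map_finset_sup' φ (hfib b) id]
    obtain ⟨x₀, hx₀⟩ := hfib b
    apply le_antisymm
    · apply Finset.sup'_le
      intro x hx
      rw [Finset.mem_filter] at hx
      exact le_of_eq hx.2
    · have hx₀' := hx₀
      rw [Finset.mem_filter] at hx₀'
      calc b = (φ ∘ id) x₀ := hx₀'.2.symm
        _ ≤ _ := Finset.le_sup' (φ ∘ id) hx₀
  have hmax : ∀ (b : β) (x : α), φ x = b → x ≤ σ b := by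
    intro b x hx
    refine Finset.le_sup' id ?_
    rw [Finset.mem_filter]
    exact ⟨Finset.mem_univ x, hx⟩
  have hσinf : ∀ b₁ b₂, σ (b₁ ⊓ b₂) = σ b₁ ⊓ σ b₂ := by
    intro b₁ b₂
    apply le_antisymm
    · rw [hσdef]
      apply Finset.sup'_le
      intro x hx
      rw [Finset.mem_filter] at hx
      refine le_inf ?_ ?_
      · have h1 : φ (x ⊔ σ b₁) = b₁ := by
          rw [map_sup, hx.2, hφσ]
          exact sup_eq_right.mpr inf_le_left
        exact le_sup_left.trans (hmax b₁ _ h1)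
      · have h1 : φ (x ⊔ σ b₂) = b₂ := by
          rw [map_sup, hx.2, hφσ]
          exact sup_eq_right.mpr inf_le_right
        exact le_sup_left.trans (hmax b₂ _ h1)
    · refine hmax _ _ ?_
      rw [map_inf, hφσ, hφσ]
  intro x y z h
  have h1 : σ x ⊓ σ y = σ x ⊓ σ z := by
    rw [← hσinf, ← hσinf, h]
  have h2 := hm (σ x) (σ y) (σ z) h1
  have h3 := congrArg φ h2
  rwa [map_inf, map_sup, hφσ, hφσ, hφσ, map_inf, hφσ, hφσ] at h3


/-- Corollary: if a finite join-semidistributive lattice is crosscut-simplicial, then so is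
every sublattice and every lattice quotient (image under a surjective lattice homomorphism). -/
theorem stmt_3 {α : Type u} [Lattice α] [Fintype α]
    (hjsd : JoinSemidistrib α) (hcc : CrosscutSimplicial α) :
    (∀ S : Sublattice α, CrosscutSimplicial S) ∧
    (∀ (β : Type v) [Lattice β] (φ : LatticeHom α β),
      Function.Surjective φ → CrosscutSimplicial β) := by
  have hmsd : MeetSemidistrib α := msd_of_jsd_crosscut hjsd hcc
  constructor
  · intro S
    exact crosscut_of_msd (msd_sublattice hmsd S)
  · intro β _ φ hφ
    exact crosscut_of_msd (msd_quotient hmsd φ hφ)
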